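/- There exist ρ ∈ (0,1) and C > 0 such that for all finitely supported f, g : ℤ → ℂ there is a ρ-sparse collection 𝒮 of discrete intervals with ∑_{n ∈ ℤ} M_HL f(n) · |g(n)| ≤ C · Λ_{𝒮,1,1}(f,g); that is, the discrete Hardy–Littlewood maximal function satisfies a (1,1) sparse bound. -/

import Mathlib

noncomputable section

/-- `e(t) = exp(2πi t)`. -/
def e (t : ℝ) : ℂ := Complex.exp (2 * Real.pi * Complex.I * t)

/-- A discrete interval is a set of the form `ℤ ∩ [a,b]`. -/
def IsDiscreteInterval (S : Finset ℤ) : Prop := ∃ a b : ℤ, a ≤ b ∧ S = Finset.Icc a b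

/-- The `L^r` average of `f` over a discrete interval `S`. -/
def avg (r : ℝ) (f : ℤ → ℂ) (S : Finset ℤ) : ℝ :=
  ((S.card : ℝ)⁻¹ * ∑ x ∈ S, ‖f x‖ ^ r) ^ (1 / r)

/-- The collection `𝒮`, with distinguished subsets `E S ⊆ S`, is `ρ`-sparse. -/
def IsSparse (ρ : ℝ) (𝒮 : Finset (Finset ℤ)) (E : Finset ℤ → Finset ℤ) : Prop :=
  (∀ S ∈ 𝒮, IsDiscreteInterval S) ∧
  (∀ S ∈ 𝒮, E S ⊆ S ∧ ρ * (S.card : ℝ) < ((E S).card : ℝ)) ∧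
  (∀ x : ℤ, ((𝒮.filter (fun S => x ∈ E S)).card : ℝ) ≤ ρ⁻¹)

/-- The sparse bilinear form `Λ_{𝒮,r,s}(f,g)`. -/
def sparseForm (r s : ℝ) (𝒮 : Finset (Finset ℤ)) (f g : ℤ → ℂ) : ℝ :=
  ∑ S ∈ 𝒮, avg r f S * avg s g S * (S.card : ℝ)

/-- The pairing `⟨F, g⟩ = ∑ₙ F(n) conj(g(n))`. -/
def pairing (F g : ℤ → ℂ) : ℂ := ∑' n : ℤ, F n * (starRingEnd ℂ) (g n)

/-- The discrete Hardy–Littlewood maximal function. -/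
def MHL (f : ℤ → ℂ) (n : ℤ) : ℝ :=
  ⨆ N : ℕ, (2 * (N : ℝ) + 1)⁻¹ * ∑ j ∈ Finset.Icc (-(N : ℤ)) (N : ℤ), ‖f (n - j)‖

namespace SparseMax
open Finset


lemma triple_cover {a b c d t : ℤ} (hab : a ≤ b) (hcd : c ≤ d)
    (h1 : t ∈ Finset.Icc c d) (h2 : t ∈ Finset.Icc a b)
    (hlen : (Finset.Icc c d).card ≤ (Finset.Icc a b).card) :
    Finset.Icc c d ⊆ Finset.Icc (a - (b - a + 1)) (b + (b - a + 1)) := by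
  simp only [mem_Icc] at h1 h2
  rw [Int.card_Icc, Int.card_Icc] at hlen
  have hdc : d - c ≤ b - a := by omega
  intro x hx
  simp only [mem_Icc] at hx ⊢
  omega

lemma vitali : ∀ (n : ℕ) (J : Finset (Finset ℤ)), J.card ≤ n →
    (∀ I ∈ J, ∃ a b : ℤ, a ≤ b ∧ I = Finset.Icc a b) →
    ∃ D ⊆ J, (∀ I ∈ D, ∀ I' ∈ D, I ≠ I' → Disjoint I I') ∧
      (J.biUnion id).card ≤ 3 * ∑ I ∈ D, I.card := by
  intro n
  induction n with
  | zero =>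
    intro J hJ _
    refine ⟨∅, empty_subset _, by simp, ?_⟩
    rw [Finset.card_eq_zero.mp (Nat.le_zero.mp hJ)]
    simp
  | succ n ih =>
    intro J hJcard hJ
    rcases J.eq_empty_or_nonempty with rfl | hne
    · exact ⟨∅, empty_subset _, by simp, by simp⟩
    obtain ⟨I0, hI0J, hmax⟩ := J.exists_max_image (fun I => I.card) hne
    obtain ⟨a, b, hab, hI0⟩ := hJ I0 hI0J
    classical
    set J' := J.filter (fun I => Disjoint I I0) with hJ'def
    have hI0ne : I0.Nonempty := by rw [hI0]; exact nonempty_Icc.mpr hab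
    have hI0notJ' : I0 ∉ J' := by
      simp only [hJ'def, mem_filter]
      rintro ⟨-, hd⟩
      exact hI0ne.ne_empty (disjoint_self.mp hd)
    have hJ'card : J'.card ≤ n := by
      have : J' ⊂ J := ssubset_iff_of_subset (filter_subset _ _) |>.mpr
        ⟨I0, hI0J, hI0notJ'⟩
      have := Finset.card_lt_card this
      omega
    obtain ⟨D', hD'sub, hD'disj, hD'card⟩ := ih J' hJ'card
      (fun I hI => hJ I (filter_subset _ _ hI))
    refine ⟨insert I0 D', ?_, ?_, ?_⟩
    · exact insert_subset hI0J (hD'sub.trans (filter_subset _ _))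
    · intro I hI I' hI' hne'
      rcases mem_insert.mp hI with h1 | h1
      · rcases mem_insert.mp hI' with h2 | h2
        · exact absurd (h1.trans h2.symm) hne'
        · exact h1 ▸ (mem_filter.mp (hD'sub h2)).2.symm
      · rcases mem_insert.mp hI' with h2 | h2
        · exact h2 ▸ (mem_filter.mp (hD'sub h1)).2
        · exact hD'disj I h1 I' h2 hne'
    · have hI0D' : I0 ∉ D' := fun h => hI0notJ' (hD'sub h)
      rw [sum_insert hI0D']
      -- cover: biUnion J ⊆ biUnion J' ∪ big
      set big := Finset.Icc (a - (b - a + 1)) (b + (b - a + 1)) with hbig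
      have hcover : J.biUnion id ⊆ (J'.biUnion id) ∪ big := by
        intro x hx
        obtain ⟨I, hIJ, hxI⟩ := mem_biUnion.mp hx
        by_cases hd : Disjoint I I0
        · exact mem_union_left _ (mem_biUnion.mpr ⟨I, mem_filter.mpr ⟨hIJ, hd⟩, hxI⟩)
        · obtain ⟨t, htI, htI0⟩ := Finset.not_disjoint_iff.mp hd
          obtain ⟨c, d, hcd, hIcd⟩ := hJ I hIJ
          have hsub : I ⊆ big := by
            rw [hIcd, hbig]
            refine triple_cover hab hcd (hIcd ▸ htI) (hI0 ▸ htI0) ?_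
            rw [← hIcd, ← hI0]
            exact hmax I hIJ
          exact mem_union_right _ (hsub hxI)
      have hbigcard : big.card = 3 * I0.card := by
        rw [hbig, hI0, Int.card_Icc, Int.card_Icc]
        omega
      calc (J.biUnion id).card ≤ ((J'.biUnion id) ∪ big).card := card_le_card hcover
        _ ≤ (J'.biUnion id).card + big.card := card_union_le _ _
        _ ≤ 3 * ∑ I ∈ D', I.card + 3 * I0.card := by omega
        _ = 3 * (I0.card + ∑ I ∈ D', I.card) := by ring

section Aux
variable (f : ℤ → ℂ)

/-- `Pf f lam n` : the uncentered maximal function of `f` at `n` exceeds `lam`. -/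
def Pf (lam : ℝ) (n : ℤ) : Prop :=
  ∃ a b : ℤ, a ≤ n ∧ n ≤ b ∧ lam * ((b - a + 1 : ℤ) : ℝ) < ∑ x ∈ Finset.Icc a b, ‖f x‖

/-- `S` is a component of the super-level set `{Pf f lam}`. -/
def isComp (lam : ℝ) (S : Finset ℤ) : Prop :=
  ∃ a b : ℤ, a ≤ b ∧ S = Finset.Icc a b ∧ (∀ x ∈ Finset.Icc a b, Pf f lam x) ∧
    ¬ Pf f lam (a - 1) ∧ ¬ Pf f lam (b + 1)

variable {f}

lemma Pf_mono {lam lam' : ℝ} {n : ℤ} (h : lam' ≤ lam) (hp : Pf f lam n) : Pf f lam' n := by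
  obtain ⟨a, b, h1, h2, h3⟩ := hp
  refine ⟨a, b, h1, h2, lt_of_le_of_lt ?_ h3⟩
  have : (0:ℝ) ≤ ((b - a + 1 : ℤ) : ℝ) := by
    have : a ≤ b := h1.trans h2
    exact_mod_cast by omega
  nlinarith

variable (T : Finset ℤ) (hT : ∀ x, x ∉ T → f x = 0)

include hT in
lemma sum_norm_le (a b : ℤ) :
    ∑ x ∈ Finset.Icc a b, ‖f x‖ ≤ ∑ x ∈ T, ‖f x‖ := by
  classical
  have h1 : ∑ x ∈ Finset.Icc a b, ‖f x‖ = ∑ x ∈ (Finset.Icc a b).filter (· ∈ T), ‖f x‖ := by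
    refine (Finset.sum_filter_of_ne ?_).symm
    intro x _ hx
    by_contra hxT
    exact hx (by rw [hT x hxT]; simp)
  rw [h1]
  refine Finset.sum_le_sum_of_subset_of_nonneg ?_ (fun _ _ _ => norm_nonneg _)
  intro x hx
  exact (mem_filter.mp hx).2

include hT in
lemma exists_support_of_pos {a b : ℤ} (h : 0 < ∑ x ∈ Finset.Icc a b, ‖f x‖) :
    ∃ s ∈ Finset.Icc a b, s ∈ T := by
  classical
  by_contra hc
  push_neg at hc
  have : ∑ x ∈ Finset.Icc a b, ‖f x‖ = 0 := by
    refine Finset.sum_eq_zero fun x hx => ?_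
    rw [hT x (hc x hx)]; simp
  linarith

include hT in
lemma Pf_bdd_below {lam : ℝ} (hlam : 0 < lam) :
    ∃ lo : ℤ, ∀ n : ℤ, Pf f lam n → lo ≤ n := by
  classical
  set F := ∑ x ∈ T, ‖f x‖ with hF
  obtain ⟨M, hM⟩ : ∃ M : ℤ, ∀ s ∈ T, M ≤ s :=
    ⟨(insert 0 T).min' (insert_nonempty _ _), fun s hs =>
      Finset.min'_le _ _ (mem_insert_of_mem hs)⟩
  refine ⟨M - (⌈F / lam⌉ + 1), fun n hn => ?_⟩
  obtain ⟨a, b, h1, h2, h3⟩ := hn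
  have hab : a ≤ b := h1.trans h2
  have hpos : 0 < ∑ x ∈ Finset.Icc a b, ‖f x‖ := by
    have : (0:ℝ) < lam * ((b - a + 1 : ℤ) : ℝ) := by
      have : (1:ℝ) ≤ ((b - a + 1 : ℤ) : ℝ) := by exact_mod_cast by omega
      nlinarith
    linarith
  obtain ⟨s, hs, hsT⟩ := exists_support_of_pos T hT hpos
  have hMs : M ≤ s := hM s hsT
  have hsb : s ≤ b := (mem_Icc.mp hs).2
  -- length bound : b - a + 1 ≤ ⌈F/lam⌉
  have hlen : ((b - a + 1 : ℤ) : ℝ) < F / lam := by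
    rw [lt_div_iff₀ hlam]
    calc ((b - a + 1 : ℤ) : ℝ) * lam = lam * ((b - a + 1 : ℤ) : ℝ) := by ring
      _ < ∑ x ∈ Finset.Icc a b, ‖f x‖ := h3
      _ ≤ F := sum_norm_le T hT a b
  have hlen2 : b - a + 1 ≤ ⌈F / lam⌉ := by
    have h := hlen.trans_le (Int.le_ceil _)
    have : b - a + 1 < ⌈F / lam⌉ := by exact_mod_cast h
    omega
  omega

include hT in
lemma Pf_bdd_above {lam : ℝ} (hlam : 0 < lam) :
    ∃ hi : ℤ, ∀ n : ℤ, Pf f lam n → n ≤ hi := by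
  classical
  set F := ∑ x ∈ T, ‖f x‖ with hF
  obtain ⟨M, hM⟩ : ∃ M : ℤ, ∀ s ∈ T, s ≤ M :=
    ⟨(insert 0 T).max' (insert_nonempty _ _), fun s hs =>
      Finset.le_max' _ _ (mem_insert_of_mem hs)⟩
  refine ⟨M + (⌈F / lam⌉ + 1), fun n hn => ?_⟩
  obtain ⟨a, b, h1, h2, h3⟩ := hn
  have hab : a ≤ b := h1.trans h2
  have hpos : 0 < ∑ x ∈ Finset.Icc a b, ‖f x‖ := by
    have : (0:ℝ) < lam * ((b - a + 1 : ℤ) : ℝ) := by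
      have : (1:ℝ) ≤ ((b - a + 1 : ℤ) : ℝ) := by exact_mod_cast by omega
      nlinarith
    linarith
  obtain ⟨s, hs, hsT⟩ := exists_support_of_pos T hT hpos
  have hMs : s ≤ M := hM s hsT
  have hsb : a ≤ s := (mem_Icc.mp hs).1
  have hlen : ((b - a + 1 : ℤ) : ℝ) < F / lam := by
    rw [lt_div_iff₀ hlam]
    calc ((b - a + 1 : ℤ) : ℝ) * lam = lam * ((b - a + 1 : ℤ) : ℝ) := by ring
      _ < ∑ x ∈ Finset.Icc a b, ‖f x‖ := h3
      _ ≤ F := sum_norm_le T hT a b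
  have hlen2 : b - a + 1 ≤ ⌈F / lam⌉ := by
    have h := hlen.trans_le (Int.le_ceil _)
    have : b - a + 1 < ⌈F / lam⌉ := by exact_mod_cast h
    omega
  omega

include hT in
lemma exists_comp {lam : ℝ} (hlam : 0 < lam) {n : ℤ} (hn : Pf f lam n) :
    ∃ S : Finset ℤ, isComp f lam S ∧ n ∈ S := by
  classical
  obtain ⟨lo, hlo⟩ := Pf_bdd_below T hT hlam
  obtain ⟨hi, hhi⟩ := Pf_bdd_above T hT hlam
  -- least left endpoint
  obtain ⟨a, ⟨han, ha⟩, hamin⟩ := Int.exists_least_of_bdd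
    (P := fun a => a ≤ n ∧ ∀ x ∈ Finset.Icc a n, Pf f lam x)
    ⟨lo, fun a ⟨han, ha⟩ => hlo a (ha a (mem_Icc.mpr ⟨le_refl a, han⟩))⟩
    ⟨n, le_refl n, fun x hx => by rw [mem_Icc] at hx; rwa [le_antisymm hx.2 hx.1]⟩
  obtain ⟨b, ⟨hnb, hb⟩, hbmax⟩ := Int.exists_greatest_of_bdd
    (P := fun b => n ≤ b ∧ ∀ x ∈ Finset.Icc n b, Pf f lam x)
    ⟨hi, fun b ⟨hnb, hb⟩ => hhi b (hb b (mem_Icc.mpr ⟨hnb, le_refl b⟩))⟩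
    ⟨n, le_refl n, fun x hx => by rw [mem_Icc] at hx; rwa [le_antisymm hx.2 hx.1]⟩
  refine ⟨Finset.Icc a b, ⟨a, b, han.trans hnb, rfl, ?_, ?_, ?_⟩,
    mem_Icc.mpr ⟨han, hnb⟩⟩
  · intro x hx
    rw [mem_Icc] at hx
    rcases le_or_gt x n with h | h
    · exact ha x (mem_Icc.mpr ⟨hx.1, h⟩)
    · exact hb x (mem_Icc.mpr ⟨h.le, hx.2⟩)
  · intro hPa
    have : a ≤ a - 1 := hamin (a - 1) ⟨by omega, fun x hx => by
      rw [mem_Icc] at hx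
      rcases eq_or_lt_of_le hx.1 with h | h
      · rwa [← h]
      · exact ha x (mem_Icc.mpr ⟨by omega, hx.2⟩)⟩
    omega
  · intro hPb
    have : b + 1 ≤ b := hbmax (b + 1) ⟨by omega, fun x hx => by
      rw [mem_Icc] at hx
      rcases eq_or_lt_of_le hx.2 with h | h
      · rwa [h]
      · exact hb x (mem_Icc.mpr ⟨hx.1, by omega⟩)⟩
    omega


lemma comp_unique {lam : ℝ} {S S' : Finset ℤ} (h : isComp f lam S) (h' : isComp f lam S')
    (hnd : ¬ Disjoint S S') : S = S' := by
  obtain ⟨a, b, hab, rfl, hP, hL, hR⟩ := h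
  obtain ⟨a', b', hab', rfl, hP', hL', hR'⟩ := h'
  obtain ⟨t, ht, ht'⟩ := Finset.not_disjoint_iff.mp hnd
  rw [mem_Icc] at ht ht'
  have ha : a = a' := by
    rcases lt_trichotomy a a' with h | h | h
    · exact absurd (hP (a' - 1) (mem_Icc.mpr ⟨by omega, by omega⟩)) hL'
    · exact h
    · exact absurd (hP' (a - 1) (mem_Icc.mpr ⟨by omega, by omega⟩)) hL
  have hb : b = b' := by
    rcases lt_trichotomy b b' with h | h | h
    · exact absurd (hP' (b + 1) (mem_Icc.mpr ⟨by omega, by omega⟩)) hR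
    · exact h
    · exact absurd (hP (b' + 1) (mem_Icc.mpr ⟨by omega, by omega⟩)) hR'
  rw [ha, hb]

lemma window_subset {lam : ℝ} {S : Finset ℤ} (hS : isComp f lam S) {c d t : ℤ}
    (hcd : c ≤ d) (hsum : lam * ((d - c + 1 : ℤ) : ℝ) < ∑ x ∈ Finset.Icc c d, ‖f x‖)
    (ht : t ∈ Finset.Icc c d) (htS : t ∈ S) : Finset.Icc c d ⊆ S := by
  obtain ⟨a, b, hab, rfl, hP, hL, hR⟩ := hS
  rw [mem_Icc] at ht htS
  have hac : a ≤ c := by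
    by_contra h
    push_neg at h
    exact hL ⟨c, d, by omega, by omega, hsum⟩
  have hdb : d ≤ b := by
    by_contra h
    push_neg at h
    exact hR ⟨c, d, by omega, by omega, hsum⟩
  exact Finset.Icc_subset_Icc hac hdb

lemma comp_card_real {S : Finset ℤ} {a b : ℤ} (hab : a ≤ b) (hS : S = Finset.Icc a b) :
    (S.card : ℝ) = ((b - a + 1 : ℤ) : ℝ) := by
  have hn : ((b + 1 - a).toNat : ℤ) = b - a + 1 := by omega
  rw [hS, Int.card_Icc]
  exact_mod_cast hn

lemma comp_mass_upper {lam : ℝ} (hlam : 0 ≤ lam) {S : Finset ℤ} (hS : isComp f lam S) :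
    ∑ x ∈ S, ‖f x‖ ≤ lam * ((S.card : ℝ) + 2) := by
  obtain ⟨a, b, hab, hSeq, hP, hL, hR⟩ := hS
  have hsub : ∑ x ∈ S, ‖f x‖ ≤ ∑ x ∈ Finset.Icc (a - 1) (b + 1), ‖f x‖ := by
    rw [hSeq]
    exact Finset.sum_le_sum_of_subset_of_nonneg
      (Finset.Icc_subset_Icc (by omega) (by omega)) (fun _ _ _ => norm_nonneg _)
  have hnot : ¬ (lam * (((b + 1) - (a - 1) + 1 : ℤ) : ℝ) <
      ∑ x ∈ Finset.Icc (a - 1) (b + 1), ‖f x‖) := by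
    intro h
    exact hL ⟨a - 1, b + 1, le_refl _, by omega, h⟩
  push_neg at hnot
  have hcard := comp_card_real hab hSeq
  calc ∑ x ∈ S, ‖f x‖ ≤ ∑ x ∈ Finset.Icc (a - 1) (b + 1), ‖f x‖ := hsub
    _ ≤ lam * (((b + 1) - (a - 1) + 1 : ℤ) : ℝ) := hnot
    _ = lam * ((S.card : ℝ) + 2) := by rw [hcard]; push_cast; ring

open scoped Classical in
lemma level_density {lam mu : ℝ} (hmu : 0 < mu) (hlm : lam ≤ mu)
    {S : Finset ℤ} (hS : isComp f lam S) :
    mu * ((S.filter (fun x => Pf f mu x)).card : ℝ) ≤ 3 * ∑ x ∈ S, ‖f x‖ := by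
  set T' := S.filter (fun x => Pf f mu x) with hT'
  have key : ∀ x : ℤ, ∃ J : Finset ℤ, x ∈ T' →
      ((∃ c d : ℤ, c ≤ d ∧ J = Finset.Icc c d) ∧ x ∈ J ∧ J ⊆ S ∧
        mu * (J.card : ℝ) < ∑ y ∈ J, ‖f y‖) := by
    intro x
    by_cases hx : x ∈ T'
    · obtain ⟨hxS, hPx⟩ := mem_filter.mp hx
      obtain ⟨c, d, hcx, hxd, hsum⟩ := hPx
      have hcd : c ≤ d := hcx.trans hxd
      refine ⟨Finset.Icc c d, fun _ => ⟨⟨c, d, hcd, rfl⟩, mem_Icc.mpr ⟨hcx, hxd⟩, ?_, ?_⟩⟩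
      · refine window_subset hS hcd ?_ (mem_Icc.mpr ⟨hcx, hxd⟩) hxS
        refine lt_of_le_of_lt ?_ hsum
        have : (0:ℝ) ≤ ((d - c + 1 : ℤ) : ℝ) := by exact_mod_cast by omega
        nlinarith
      · rwa [comp_card_real hcd rfl]
    · exact ⟨∅, fun h => absurd h hx⟩
  choose J hJ using key
  set 𝒥 := T'.image J with h𝒥
  have hJint : ∀ I ∈ 𝒥, ∃ a b : ℤ, a ≤ b ∧ I = Finset.Icc a b := by
    intro I hI
    obtain ⟨x, hx, rfl⟩ := Finset.mem_image.mp hI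
    exact (hJ x hx).1
  obtain ⟨D, hDsub, hDdisj, hDcard⟩ := vitali 𝒥.card 𝒥 le_rfl hJint
  have hT'sub : T' ⊆ 𝒥.biUnion id := by
    intro x hx
    exact mem_biUnion.mpr ⟨J x, Finset.mem_image_of_mem J hx, (hJ x hx).2.1⟩
  have hcard : (T'.card : ℝ) ≤ 3 * ∑ I ∈ D, (I.card : ℝ) := by
    have h1 : T'.card ≤ 3 * ∑ I ∈ D, I.card :=
      le_trans (Finset.card_le_card hT'sub) hDcard
    exact_mod_cast h1
  have hmass : ∀ I ∈ D, mu * (I.card : ℝ) ≤ ∑ y ∈ I, ‖f y‖ := by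
    intro I hI
    obtain ⟨x, hx, rfl⟩ := Finset.mem_image.mp (hDsub hI)
    exact ((hJ x hx).2.2.2).le
  have hsum2 : ∑ I ∈ D, ∑ y ∈ I, ‖f y‖ ≤ ∑ x ∈ S, ‖f x‖ := by
    rw [← Finset.sum_biUnion (fun I hI I' hI' hne => hDdisj I hI I' hI' hne)]
    refine Finset.sum_le_sum_of_subset_of_nonneg ?_ (fun _ _ _ => norm_nonneg _)
    intro y hy
    obtain ⟨I, hI, hyI⟩ := mem_biUnion.mp hy
    obtain ⟨x, hx, rfl⟩ := Finset.mem_image.mp (hDsub hI)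
    exact (hJ x hx).2.2.1 hyI
  have h1 : ∑ I ∈ D, mu * (I.card : ℝ) ≤ ∑ I ∈ D, ∑ y ∈ I, ‖f y‖ := Finset.sum_le_sum hmass
  have h2 : mu * ∑ I ∈ D, (I.card : ℝ) = ∑ I ∈ D, mu * (I.card : ℝ) := Finset.mul_sum _ _ _
  have h3 : mu * (3 * ∑ I ∈ D, (I.card : ℝ)) = 3 * (mu * ∑ I ∈ D, (I.card : ℝ)) := by
    set X := ∑ I ∈ D, (I.card : ℝ); ring
  have h4 : mu * (T'.card : ℝ) ≤ mu * (3 * ∑ I ∈ D, (I.card : ℝ)) :=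
    mul_le_mul_of_nonneg_left hcard hmu.le
  linarith


lemma sum_window (n : ℤ) (N : ℕ) :
    ∑ j ∈ Finset.Icc (-(N : ℤ)) (N : ℤ), ‖f (n - j)‖
      = ∑ x ∈ Finset.Icc (n - N) (n + N), ‖f x‖ := by
  refine Finset.sum_nbij' (fun j => n - j) (fun x => n - x) ?_ ?_ ?_ ?_ ?_ <;>
    intros <;> simp_all [mem_Icc] <;> omega


include hT in
lemma MHL_bdd (n : ℤ) : BddAbove (Set.range fun N : ℕ =>
    (2 * (N : ℝ) + 1)⁻¹ * ∑ j ∈ Finset.Icc (-(N : ℤ)) (N : ℤ), ‖f (n - j)‖) := by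
  refine ⟨∑ x ∈ T, ‖f x‖, ?_⟩
  rintro y ⟨N, rfl⟩
  have h1 : ∑ j ∈ Finset.Icc (-(N : ℤ)) (N : ℤ), ‖f (n - j)‖ ≤ ∑ x ∈ T, ‖f x‖ := by
    rw [sum_window]
    exact sum_norm_le T hT _ _
  have h2 : (2 * (N : ℝ) + 1)⁻¹ ≤ 1 := by
    rw [inv_le_one_iff₀]
    right
    have : (0:ℝ) ≤ (N:ℝ) := Nat.cast_nonneg N
    linarith
  have h3 : (0:ℝ) < (2 * (N : ℝ) + 1)⁻¹ := by positivity
  have h4 : (0:ℝ) ≤ ∑ j ∈ Finset.Icc (-(N : ℤ)) (N : ℤ), ‖f (n - j)‖ :=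
    Finset.sum_nonneg fun _ _ => norm_nonneg _
  calc (2 * (N : ℝ) + 1)⁻¹ * ∑ j ∈ Finset.Icc (-(N : ℤ)) (N : ℤ), ‖f (n - j)‖
      ≤ 1 * (∑ x ∈ T, ‖f x‖) := mul_le_mul h2 h1 h4 zero_le_one
    _ = ∑ x ∈ T, ‖f x‖ := one_mul _

include hT in
lemma MHL_le_F (n : ℤ) : MHL f n ≤ ∑ x ∈ T, ‖f x‖ := by
  refine ciSup_le fun N => ?_
  have := MHL_bdd T hT n
  have h1 : ∑ j ∈ Finset.Icc (-(N : ℤ)) (N : ℤ), ‖f (n - j)‖ ≤ ∑ x ∈ T, ‖f x‖ := by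
    rw [sum_window]; exact sum_norm_le T hT _ _
  have h2 : (2 * (N : ℝ) + 1)⁻¹ ≤ 1 := by
    rw [inv_le_one_iff₀]; right
    have : (0:ℝ) ≤ (N:ℝ) := Nat.cast_nonneg N
    linarith
  have h4 : (0:ℝ) ≤ ∑ j ∈ Finset.Icc (-(N : ℤ)) (N : ℤ), ‖f (n - j)‖ :=
    Finset.sum_nonneg fun _ _ => norm_nonneg _
  calc (2 * (N : ℝ) + 1)⁻¹ * ∑ j ∈ Finset.Icc (-(N : ℤ)) (N : ℤ), ‖f (n - j)‖
      ≤ 1 * (∑ x ∈ T, ‖f x‖) := mul_le_mul h2 h1 h4 zero_le_one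
    _ = _ := one_mul _

include hT in
lemma Pf_of_lt_MHL {lam : ℝ} {n : ℤ} (hlam : 0 ≤ lam) (h : lam < MHL f n) :
    Pf f lam n := by
  rw [MHL, lt_ciSup_iff (MHL_bdd T hT n)] at h
  obtain ⟨N, hN⟩ := h
  refine ⟨n - N, n + N, by omega, by omega, ?_⟩
  have hpos : (0:ℝ) < 2 * (N : ℝ) + 1 := by positivity
  have hcast : (((n + N) - (n - N) + 1 : ℤ) : ℝ) = 2 * (N : ℝ) + 1 := by push_cast; ring
  rw [hcast, ← sum_window]
  calc lam * (2 * (N : ℝ) + 1)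
      < ((2 * (N : ℝ) + 1)⁻¹ * ∑ j ∈ Finset.Icc (-(N : ℤ)) (N : ℤ), ‖f (n - j)‖)
          * (2 * (N : ℝ) + 1) := by
        exact mul_lt_mul_of_pos_right hN hpos
    _ = ∑ j ∈ Finset.Icc (-(N : ℤ)) (N : ℤ), ‖f (n - j)‖ := by
        field_simp
  
include hT in
lemma MHL_pos {m : ℤ} (hm : f m ≠ 0) (n : ℤ) : 0 < MHL f n := by
  set N : ℕ := (n - m).natAbs with hN
  have hmem : m ∈ Finset.Icc (n - (N:ℤ)) (n + (N:ℤ)) := by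
    rw [mem_Icc]
    omega
  have hterm : (0:ℝ) < (2 * (N : ℝ) + 1)⁻¹ * ∑ j ∈ Finset.Icc (-(N : ℤ)) (N : ℤ), ‖f (n - j)‖ := by
    have h1 : ‖f m‖ ≤ ∑ x ∈ Finset.Icc (n - (N:ℤ)) (n + (N:ℤ)), ‖f x‖ :=
      Finset.single_le_sum (fun _ _ => norm_nonneg _) hmem
    have h2 : (0:ℝ) < ‖f m‖ := norm_pos_iff.mpr hm
    have h3 : (0:ℝ) < (2 * (N : ℝ) + 1)⁻¹ := by positivity
    rw [sum_window]
    nlinarith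
  exact hterm.trans_le (le_ciSup (MHL_bdd T hT n) N)

end Aux
end SparseMax

/-- the discrete Hardy–Littlewood maximal function satisfies a `(1,1)` sparse bound. -/
theorem sparse_bound_maximal_function :
    ∃ ρ : ℝ, 0 < ρ ∧ ρ < 1 ∧ ∃ C : ℝ, 0 < C ∧
      ∀ f g : ℤ → ℂ, (Function.support f).Finite → (Function.support g).Finite →
        ∃ (𝒮 : Finset (Finset ℤ)) (E : Finset ℤ → Finset ℤ), IsSparse ρ 𝒮 E ∧
          ∑' n : ℤ, MHL f n * ‖g n‖ ≤ C * sparseForm 1 1 𝒮 f g := by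
  classical
  refine ⟨1/8, by norm_num, by norm_num, 6, by norm_num, ?_⟩
  intro f g hf hg
  by_cases hf0 : f = 0
  · refine ⟨∅, fun _ => ∅, ⟨fun S hS => absurd hS (Finset.notMem_empty S),
      fun S hS => absurd hS (Finset.notMem_empty S), fun x => by norm_num⟩, ?_⟩
    have hM : ∀ n : ℤ, MHL f n = 0 := by
      intro n
      have : ∀ N : ℕ, (2 * (N : ℝ) + 1)⁻¹ *
          ∑ j ∈ Finset.Icc (-(N : ℤ)) (N : ℤ), ‖f (n - j)‖ = 0 := by
        intro N
        rw [hf0]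
        simp
      rw [MHL]
      simp only [this]
      exact ciSup_const
    have hz : (fun n : ℤ => MHL f n * ‖g n‖) = fun _ => 0 := by
      funext n; rw [hM]; ring
    rw [hz, tsum_zero, sparseForm]
    simp
  · obtain ⟨m, hm⟩ : ∃ m, f m ≠ 0 := by
      by_contra h
      push_neg at h
      exact hf0 (funext h)
    set Tf := hf.toFinset with hTfdef
    set Tg := hg.toFinset with hTgdef
    have hTf : ∀ x, x ∉ Tf → f x = 0 := by
      intro x hx
      by_contra h
      exact hx (hf.mem_toFinset.mpr h)
    have hgsupp : ∀ n, n ∉ Tg → g n = 0 := by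
      intro x hx
      by_contra h
      exact hx (hg.mem_toFinset.mpr h)
    set F := ∑ x ∈ Tf, ‖f x‖ with hFdef
    have hF0 : 0 < F := by
      have h1 : ‖f m‖ ≤ F := Finset.single_le_sum (fun _ _ => norm_nonneg _)
        (hf.mem_toFinset.mpr hm)
      have h2 := norm_pos_iff.mpr hm
      linarith
    have hMle : ∀ n, MHL f n ≤ F := fun n => SparseMax.MHL_le_F Tf hTf n
    have hMpos : ∀ n, 0 < MHL f n := fun n => SparseMax.MHL_pos Tf hTf hm n
    have key : ∀ n : ℤ, ∃ (k : ℕ) (S : Finset ℤ), 1 ≤ k ∧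
        SparseMax.isComp f (F / 2 ^ k) S ∧ n ∈ S ∧ MHL f n ≤ 2 * (F / 2 ^ k) := by
      intro n
      have hex : ∃ k : ℕ, F / 2 ^ k < MHL f n := by
        obtain ⟨k, hk⟩ := pow_unbounded_of_one_lt (F / MHL f n) (by norm_num : (1:ℝ) < 2)
        refine ⟨k, ?_⟩
        have h2 : F < 2 ^ k * MHL f n := (div_lt_iff₀ (hMpos n)).mp hk
        rw [div_lt_iff₀ (by positivity : (0:ℝ) < 2 ^ k)]
        linarith
      have hspec : F / 2 ^ Nat.find hex < MHL f n := Nat.find_spec hex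
      set k := Nat.find hex with hkdef
      have hk0 : k ≠ 0 := by
        intro h
        rw [h] at hspec
        simp at hspec
        exact absurd hspec (not_lt.mpr (hMle n))
      have hk1 : 1 ≤ k := Nat.one_le_iff_ne_zero.mpr hk0
      have hmin : ¬ (F / 2 ^ (k - 1) < MHL f n) := Nat.find_min hex (by omega)
      push_neg at hmin
      have hupper : MHL f n ≤ 2 * (F / 2 ^ k) := by
        have hpow : (2:ℝ) ^ k = 2 ^ (k - 1) * 2 := by
          rw [← pow_succ]
          congr 1
          omega
        have heq : F / 2 ^ (k - 1) = 2 * (F / 2 ^ k) := by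
          rw [hpow]
          field_simp
        rw [← heq]
        exact hmin
      have hlam : (0:ℝ) < F / 2 ^ k := by positivity
      have hPn : SparseMax.Pf f (F / 2 ^ k) n := SparseMax.Pf_of_lt_MHL Tf hTf hlam.le hspec
      obtain ⟨S, hcompS, hmemS⟩ := SparseMax.exists_comp Tf hTf hlam hPn
      exact ⟨k, S, hk1, hcompS, hmemS, hupper⟩
    choose kk SS hk1 hcomp hmemS hMb using key
    set 𝒮 := Tg.image SS with h𝒮
    set Q : Finset ℤ → ℕ → Prop := fun S' k => 1 ≤ k ∧ SparseMax.isComp f (F / 2 ^ k) S'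
      with hQ
    set E : Finset ℤ → Finset ℤ := fun S' =>
      if h : ∃ k, Q S' k then
        S'.filter (fun x => ¬ SparseMax.Pf f (32 * (F / 2 ^ Nat.find h)) x)
      else ∅ with hE
    have hexQ : ∀ S' ∈ 𝒮, ∃ k, Q S' k := by
      intro S' hS'
      obtain ⟨n, hn, rfl⟩ := Finset.mem_image.mp hS'
      exact ⟨kk n, hk1 n, hcomp n⟩
    have hcard1 : ∀ {S' : Finset ℤ} {lam : ℝ}, SparseMax.isComp f lam S' → (1:ℝ) ≤ S'.card := by
      rintro S' lam ⟨a, b, hab, rfl, -, -, -⟩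
      have h1 : 0 < (Finset.Icc a b).card := Finset.card_pos.mpr (Finset.nonempty_Icc.mpr hab)
      exact_mod_cast h1
    -- sparsity clause 2
    have hsparse2 : ∀ S' ∈ 𝒮, E S' ⊆ S' ∧ (1/8 : ℝ) * (S'.card : ℝ) < ((E S').card : ℝ) := by
      intro S' hS'
      have hx := hexQ S' hS'
      have hQK := Nat.find_spec hx
      set K := Nat.find hx with hKdef
      have hEeq : E S' = S'.filter (fun x => ¬ SparseMax.Pf f (32 * (F / 2 ^ K)) x) := by
        simp only [hE]
        rw [dif_pos hx]
      have hlam : (0:ℝ) < F / 2 ^ K := by positivity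
      have hld := SparseMax.level_density (mu := 32 * (F / 2 ^ K))
        (by positivity) (le_mul_of_one_le_left hlam.le (by norm_num)) hQK.2
      have hup := SparseMax.comp_mass_upper hlam.le hQK.2
      have hc1 := hcard1 hQK.2
      have hsplit : ((S'.filter (fun x => SparseMax.Pf f (32 * (F / 2 ^ K)) x)).card : ℝ)
          + ((S'.filter (fun x => ¬ SparseMax.Pf f (32 * (F / 2 ^ K)) x)).card : ℝ)
          = (S'.card : ℝ) := by
        exact_mod_cast congrArg (Nat.cast (R := ℝ))
          (Finset.card_filter_add_card_filter_not
            (p := fun x => SparseMax.Pf f (32 * (F / 2 ^ K)) x))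
      refine ⟨hEeq ▸ Finset.filter_subset _ _, ?_⟩
      rw [hEeq]
      set Pc := ((S'.filter (fun x => SparseMax.Pf f (32 * (F / 2 ^ K)) x)).card : ℝ) with hPc
      set cS := (S'.card : ℝ) with hcS
      have hPcb : 32 * Pc ≤ 9 * cS := by
        refine le_of_mul_le_mul_right ?_ hlam
        have hlc : F / 2 ^ K ≤ (F / 2 ^ K) * cS :=
          le_mul_of_one_le_right hlam.le hc1
        linarith [hld, hup]
      have hPcnn : 0 ≤ Pc := hPc ▸ Nat.cast_nonneg _
      linarith
    -- sparsity clause 3 (overlap)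
    set κ : Finset ℤ → ℕ := fun S' => if h : ∃ k, Q S' k then Nat.find h else 0 with hκ
    have hsparse3 : ∀ x : ℤ, ((𝒮.filter (fun S' => x ∈ E S')).card : ℝ) ≤ ((1:ℝ)/8)⁻¹ := by
      intro x
      set A := 𝒮.filter (fun S' => x ∈ E S') with hA
      have hmemA : ∀ S' ∈ A, x ∈ S' ∧
          ¬ SparseMax.Pf f (32 * (F / 2 ^ κ S')) x ∧ SparseMax.Pf f (F / 2 ^ κ S') x ∧
          SparseMax.isComp f (F / 2 ^ κ S') S' := by
        intro S' hS'
        obtain ⟨hS'𝒮, hxE⟩ := Finset.mem_filter.mp hS'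
        have h' := hexQ S' hS'𝒮
        have hκeq : κ S' = Nat.find h' := by
          simp only [hκ]
          rw [dif_pos h']
        have hEeq : E S' = S'.filter
            (fun y => ¬ SparseMax.Pf f (32 * (F / 2 ^ Nat.find h')) y) := by
          simp only [hE]
          rw [dif_pos h']
        rw [hEeq, Finset.mem_filter] at hxE
        have hQK := Nat.find_spec h'
        obtain ⟨a, b, hab, hSeq, hP, hL, hR⟩ := hQK.2
        rw [hκeq]
        exact ⟨hxE.1, hxE.2, hP x (hSeq ▸ hxE.1), ⟨a, b, hab, hSeq, hP, hL, hR⟩⟩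
      have hcard5 : A.card ≤ 5 := by
        rcases A.eq_empty_or_nonempty with h | hAne
        · rw [h]; simp
        have hinj : Set.InjOn κ ↑A := by
          intro S1 h1 S2 h2 heq
          have f1 := hmemA S1 (Finset.mem_coe.mp h1)
          have f2 := hmemA S2 (Finset.mem_coe.mp h2)
          refine SparseMax.comp_unique f1.2.2.2 (heq ▸ f2.2.2.2) ?_
          exact Finset.not_disjoint_iff.mpr ⟨x, f1.1, f2.1⟩
        have hAim : A.card = (A.image κ).card := (Finset.card_image_of_injOn hinj).symm
        have hne' : (A.image κ).Nonempty := hAne.image κ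
        set mmin := (A.image κ).min' hne' with hmmin
        obtain ⟨S0, hS0A, hS0κ⟩ := Finset.mem_image.mp (Finset.min'_mem (A.image κ) hne')
        have hsub : A.image κ ⊆ Finset.Icc mmin (mmin + 4) := by
          intro j hj
          obtain ⟨S1, hS1A, hS1κ⟩ := Finset.mem_image.mp hj
          rw [Finset.mem_Icc]
          refine ⟨Finset.min'_le _ _ hj, ?_⟩
          by_contra hcon
          push_neg at hcon
          have hjm : mmin + 5 ≤ j := by omega
          have hpow : (2:ℝ) ^ mmin * 32 ≤ 2 ^ j := by
            calc (2:ℝ) ^ mmin * 32 = 2 ^ (mmin + 5) := by rw [pow_add]; norm_num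
              _ ≤ 2 ^ j := by
                  refine pow_le_pow_right₀ (by norm_num) hjm
          have hle : 32 * (F / 2 ^ j) ≤ F / 2 ^ mmin := by
            rw [mul_div_assoc', div_le_div_iff₀ (by positivity) (by positivity)]
            have hmul := mul_le_mul_of_nonneg_left hpow hF0.le
            linarith
          have hPfx : SparseMax.Pf f (F / 2 ^ mmin) x := by
            have := (hmemA S0 hS0A).2.2.1
            rwa [hS0κ] at this
          have hnPfx : ¬ SparseMax.Pf f (32 * (F / 2 ^ j)) x := by
            have := (hmemA S1 hS1A).2.1
            rwa [hS1κ] at this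
          exact hnPfx (SparseMax.Pf_mono hle hPfx)
        calc A.card = (A.image κ).card := hAim
          _ ≤ (Finset.Icc mmin (mmin + 4)).card := Finset.card_le_card hsub
          _ = 5 := by rw [Nat.card_Icc]; omega
      have h5 : ((A.card : ℝ)) ≤ 5 := by exact_mod_cast hcard5
      have h8 : ((1:ℝ)/8)⁻¹ = 8 := by norm_num
      rw [h8]
      linarith
    -- domination
    have hScard : ∀ S' ∈ 𝒮, (1:ℝ) ≤ (S'.card : ℝ) := by
      intro S' hS'
      obtain ⟨n, hn, rfl⟩ := Finset.mem_image.mp hS'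
      exact hcard1 (hcomp n)
    have hlow : ∀ n : ℤ, (F / 2 ^ kk n) * ((SS n).card : ℝ) ≤ 3 * ∑ x ∈ SS n, ‖f x‖ := by
      intro n
      have hlam : (0:ℝ) < F / 2 ^ kk n := by positivity
      have hld := SparseMax.level_density hlam (le_refl _) (hcomp n)
      have hfe : (SS n).filter (fun x => SparseMax.Pf f (F / 2 ^ kk n) x) = SS n := by
        refine Finset.filter_true_of_mem ?_
        intro y hy
        obtain ⟨a, b, hab, hSeq, hP, -, -⟩ := hcomp n
        exact hP y (hSeq ▸ hy)
      rwa [hfe] at hld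
    set c : Finset ℤ → ℝ := fun S' => (∑ x ∈ S', ‖f x‖) / (S'.card : ℝ) with hc
    have hcnn : ∀ S', 0 ≤ c S' :=
      fun S' => div_nonneg (Finset.sum_nonneg fun _ _ => norm_nonneg _) (Nat.cast_nonneg _)
    have hpern : ∀ n ∈ Tg, MHL f n * ‖g n‖ ≤ 6 * c (SS n) * ‖g n‖ := by
      intro n hn
      have hcp : (0:ℝ) < ((SS n).card : ℝ) := lt_of_lt_of_le one_pos (hcard1 (hcomp n))
      have h2 : F / 2 ^ kk n ≤ 3 * c (SS n) := by
        have h3 : 3 * c (SS n) = (3 * ∑ x ∈ SS n, ‖f x‖) / ((SS n).card : ℝ) := by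
          rw [hc]; ring
        rw [h3, le_div_iff₀ hcp]
        exact hlow n
      have h1 : MHL f n ≤ 6 * c (SS n) := by
        have hb := hMb n
        linarith
      exact mul_le_mul_of_nonneg_right h1 (norm_nonneg _)
    have htsum : ∑' n : ℤ, MHL f n * ‖g n‖ = ∑ n ∈ Tg, MHL f n * ‖g n‖ := by
      refine tsum_eq_sum ?_
      intro n hn
      rw [hgsupp n hn]
      simp
    have hmaps : ∀ n ∈ Tg, SS n ∈ 𝒮 := fun n hn => Finset.mem_image_of_mem SS hn
    have hfiber : ∑ S' ∈ 𝒮, ∑ n ∈ Tg.filter (fun n => SS n = S'), (6 * c (SS n) * ‖g n‖)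
        = ∑ n ∈ Tg, 6 * c (SS n) * ‖g n‖ :=
      Finset.sum_fiberwise_of_maps_to hmaps _
    have hinner : ∀ S' ∈ 𝒮, ∑ n ∈ Tg.filter (fun n => SS n = S'), (6 * c (SS n) * ‖g n‖)
        ≤ 6 * (c S' * ∑ y ∈ S', ‖g y‖) := by
      intro S' hS'
      have h1 : ∑ n ∈ Tg.filter (fun n => SS n = S'), (6 * c (SS n) * ‖g n‖)
          = ∑ n ∈ Tg.filter (fun n => SS n = S'), (6 * c S' * ‖g n‖) := by
        refine Finset.sum_congr rfl fun n hn => ?_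
        rw [(Finset.mem_filter.mp hn).2]
      have h2 : ∑ n ∈ Tg.filter (fun n => SS n = S'), ‖g n‖ ≤ ∑ y ∈ S', ‖g y‖ := by
        refine Finset.sum_le_sum_of_subset_of_nonneg ?_ (fun _ _ _ => norm_nonneg _)
        intro n hn
        obtain ⟨-, hh⟩ := Finset.mem_filter.mp hn
        exact hh ▸ hmemS n
      have h6c : (0:ℝ) ≤ 6 * c S' := by
        have := hcnn S'
        linarith
      calc ∑ n ∈ Tg.filter (fun n => SS n = S'), (6 * c (SS n) * ‖g n‖)
          = (6 * c S') * ∑ n ∈ Tg.filter (fun n => SS n = S'), ‖g n‖ := by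
            rw [h1, Finset.mul_sum]
        _ ≤ (6 * c S') * ∑ y ∈ S', ‖g y‖ := mul_le_mul_of_nonneg_left h2 h6c
        _ = 6 * (c S' * ∑ y ∈ S', ‖g y‖) := by ring
    have hform : sparseForm 1 1 𝒮 f g = ∑ S' ∈ 𝒮, c S' * ∑ y ∈ S', ‖g y‖ := by
      rw [sparseForm]
      refine Finset.sum_congr rfl fun S' hS' => ?_
      have hcp : (0:ℝ) < (S'.card : ℝ) := lt_of_lt_of_le one_pos (hScard S' hS')
      have havg : ∀ h : ℤ → ℂ, avg 1 h S' = (S'.card : ℝ)⁻¹ * ∑ x ∈ S', ‖h x‖ := by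
        intro h
        rw [avg]
        norm_num [Real.rpow_one]
      have hcne : (S'.card : ℝ) ≠ 0 := ne_of_gt hcp
      rw [havg f, havg g]
      simp only [hc]
      rw [div_eq_mul_inv]
      calc ((S'.card : ℝ)⁻¹ * ∑ x ∈ S', ‖f x‖) * ((S'.card : ℝ)⁻¹ * ∑ x ∈ S', ‖g x‖)
            * (S'.card : ℝ)
          = ((∑ x ∈ S', ‖f x‖) * (S'.card : ℝ)⁻¹ * ∑ x ∈ S', ‖g x‖)
            * ((S'.card : ℝ)⁻¹ * (S'.card : ℝ)) := by ring
        _ = (∑ x ∈ S', ‖f x‖) * (S'.card : ℝ)⁻¹ * ∑ x ∈ S', ‖g x‖ := by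
            rw [inv_mul_cancel₀ hcne, mul_one]
    refine ⟨𝒮, E, ⟨?_, hsparse2, hsparse3⟩, ?_⟩
    · intro S' hS'
      obtain ⟨n, hn, rfl⟩ := Finset.mem_image.mp hS'
      obtain ⟨a, b, hab, hSeq, -, -, -⟩ := hcomp n
      exact ⟨a, b, hab, hSeq⟩
    · rw [htsum]
      calc ∑ n ∈ Tg, MHL f n * ‖g n‖ ≤ ∑ n ∈ Tg, 6 * c (SS n) * ‖g n‖ :=
            Finset.sum_le_sum hpern
        _ = ∑ S' ∈ 𝒮, ∑ n ∈ Tg.filter (fun n => SS n = S'), (6 * c (SS n) * ‖g n‖) :=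
            hfiber.symm
        _ ≤ ∑ S' ∈ 𝒮, 6 * (c S' * ∑ y ∈ S', ‖g y‖) := Finset.sum_le_sum hinner
        _ = 6 * sparseForm 1 1 𝒮 f g := by rw [hform, Finset.mul_sum]
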